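/- The order of runs does not affect the Grundy value of GA1: if two bit strings have sequences of run lengths that are permutations of each other, then the two GA1 positions have the same Grundy value. -/

import Mathlib

/-- The minimum excludant of a set of naturals. -/
noncomputable def mex (S : Set ℕ) : ℕ := sInf {n : ℕ | n ∉ S}

/-- The entropy of a bit string: the number of adjacent pairs of unequal bits. -/
def entropy (b : List Bool) : ℕ := (b.zip b.tail).countP fun p => p.1 != p.2

/-- Crossover at position `k` (1-indexed): flip bits `b₁,…,b_k`. -/
def ga1Crossover (k : ℕ) (b : List Bool) : List Bool := (b.take k).map (! ·) ++ b.drop k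

/-- Mutation at (0-indexed) position `i`: flip bit `i`. -/
def ga1Mutate (i : ℕ) (b : List Bool) : List Bool := b.set i (!(b.getD i false))

/-- The legal moves of GA1: a crossover or a mutation that strictly increases entropy. -/
def ga1Move (b b' : List Bool) : Prop :=
  ((∃ k, 1 ≤ k ∧ k ≤ b.length - 1 ∧ b' = ga1Crossover k b) ∨
    (∃ i, i < b.length ∧ b' = ga1Mutate i b)) ∧
  entropy b < entropy b'

/-- Helper for computing run lengths: `cur` is the current bit, `cnt` the length of the
current run so far. -/
def runLengthsAux (cur : Bool) (cnt : ℕ) : List Bool → List ℕ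
  | [] => [cnt]
  | a :: rest => if a = cur then runLengthsAux cur (cnt + 1) rest
                 else cnt :: runLengthsAux a 1 rest

/-- The sequence of run lengths of a bit string (a run is a maximal constant sub-string). -/
def runLengths : List Bool → List ℕ
  | [] => []
  | a :: rest => runLengthsAux a 1 rest

def fromRuns (v : Bool) : List ℕ → List Bool
  | [] => []
  | r :: rs => List.replicate r v ++ fromRuns (!v) rs

lemma fromRuns_nil (v : Bool) : fromRuns v [] = [] := rfl
lemma fromRuns_cons (v : Bool) (r : ℕ) (rs : List ℕ) :
    fromRuns v (r :: rs) = List.replicate r v ++ fromRuns (!v) rs := rfl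

lemma runLengthsAux_cons_self (v : Bool) (c : ℕ) (x : List Bool) :
    runLengthsAux v c (v :: x) = runLengthsAux v (c + 1) x := by
  simp [runLengthsAux]

lemma runLengthsAux_cons_ne (v a : Bool) (c : ℕ) (x : List Bool) (h : a ≠ v) :
    runLengthsAux v c (a :: x) = c :: runLengthsAux a 1 x := by
  simp [runLengthsAux, h]

lemma runLengthsAux_replicate (v : Bool) (c m : ℕ) (x : List Bool) :
    runLengthsAux v c (List.replicate m v ++ x) = runLengthsAux v (c + m) x := by
  induction m generalizing c with
  | zero => simp
  | succ n ih =>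
    rw [List.replicate_succ, List.cons_append, runLengthsAux_cons_self, ih]
    ring_nf

lemma runLengthsAux_fromRuns_not (v : Bool) (c : ℕ) (l : List ℕ)
    (hl : ∀ x ∈ l, 0 < x) :
    runLengthsAux v c (fromRuns (!v) l) = c :: l := by
  induction l generalizing v c with
  | nil => rfl
  | cons h t ih =>
    have hh : 0 < h := hl h (by simp)
    obtain ⟨h', rfl⟩ : ∃ h', h = h' + 1 := ⟨h - 1, by omega⟩
    rw [fromRuns_cons, List.replicate_succ, List.cons_append,
      runLengthsAux_cons_ne _ _ _ _ (by simp), runLengthsAux_replicate]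
    have h2 := ih (!v) (1 + h') (fun x hx => hl x (by simp [hx]))
    rw [Bool.not_not] at h2 ⊢
    rw [h2]
    congr 2
    omega

lemma runLengths_fromRuns (v : Bool) (l : List ℕ) (hl : ∀ x ∈ l, 0 < x) :
    runLengths (fromRuns v l) = l := by
  cases l with
  | nil => rfl
  | cons h t =>
    have hh : 0 < h := hl h (by simp)
    obtain ⟨h', rfl⟩ : ∃ h', h = h' + 1 := ⟨h - 1, by omega⟩
    rw [fromRuns_cons, List.replicate_succ, List.cons_append]
    show runLengthsAux _ 1 _ = _
    rw [runLengthsAux_replicate,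
      runLengthsAux_fromRuns_not v (1 + h') t (fun x hx => hl x (by simp [hx]))]
    congr 1
    omega

lemma exists_fromRuns (b : List Bool) :
    ∃ v l, (∀ x ∈ l, 0 < x) ∧ b = fromRuns v l := by
  induction b with
  | nil => exact ⟨false, [], by simp, rfl⟩
  | cons a b ih =>
    obtain ⟨v, l, hl, rfl⟩ := ih
    cases l with
    | nil => exact ⟨a, [1], by simp, by simp [fromRuns_cons, fromRuns_nil]⟩
    | cons h t =>
      by_cases hav : a = v
      · subst hav
        refine ⟨a, (h+1) :: t, ?_, by simp [fromRuns_cons, List.replicate_succ]⟩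
        intro x hx
        rcases List.mem_cons.1 hx with rfl | hx
        · omega
        · exact hl x (by simp [hx])
      · have hne : a = !v := by cases a <;> cases v <;> simp_all
        subst hne
        refine ⟨!v, 1 :: h :: t, ?_, ?_⟩
        · intro x hx
          rcases List.mem_cons.1 hx with rfl | hx
          · omega
          · exact hl x hx
        · simp [fromRuns_cons]

lemma length_fromRuns (v : Bool) (l : List ℕ) : (fromRuns v l).length = l.sum := by
  induction l generalizing v with
  | nil => rfl
  | cons h t ih => simp [fromRuns_cons, ih]

lemma entropy_cons_cons (a b : Bool) (t : List Bool) :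
    entropy (a :: b :: t) = entropy (b :: t) + (if a != b then 1 else 0) := by
  simp [entropy, List.countP_cons]

lemma entropy_replicate (m : ℕ) (v : Bool) : entropy (List.replicate m v) = 0 := by
  induction m with
  | zero => rfl
  | succ n ih =>
    cases n with
    | zero => rfl
    | succ k =>
      rw [List.replicate_succ, List.replicate_succ, entropy_cons_cons]
      rw [List.replicate_succ] at ih
      simp [ih]

lemma entropy_replicate_append (m : ℕ) (v : Bool) (x : List Bool) :
    entropy (List.replicate m v ++ (v :: x)) = entropy (v :: x) := by
  induction m with
  | zero => rfl
  | succ n ih =>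
    rw [List.replicate_succ, List.cons_append]
    cases n with
    | zero => simpa [entropy_cons_cons] using ih
    | succ k =>
      rw [List.replicate_succ, List.cons_append, entropy_cons_cons]
      rw [List.replicate_succ, List.cons_append] at ih
      simp [ih]

lemma fromRuns_pos_cons (v : Bool) (h : ℕ) (t : List ℕ) (hh : 0 < h) :
    fromRuns v (h :: t) = v :: (List.replicate (h-1) v ++ fromRuns (!v) t) := by
  obtain ⟨h', rfl⟩ : ∃ h', h = h' + 1 := ⟨h - 1, by omega⟩
  simp [fromRuns_cons, List.replicate_succ]

lemma entropy_fromRuns (v : Bool) (l : List ℕ) (hl : ∀ x ∈ l, 0 < x) (hne : l ≠ []) :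
    entropy (fromRuns v l) = l.length - 1 := by
  induction l generalizing v with
  | nil => simp at hne
  | cons r t ih =>
    cases t with
    | nil =>
      simp [fromRuns_cons, fromRuns_nil, entropy_replicate]
    | cons h t' =>
      have hr : 0 < r := hl r (by simp)
      have hh : 0 < h := hl h (by simp)
      obtain ⟨r', rfl⟩ : ∃ r', r = r' + 1 := ⟨r - 1, by omega⟩
      rw [fromRuns_cons, fromRuns_pos_cons _ _ _ hh,
        show List.replicate (r'+1) v = List.replicate r' v ++ [v] from List.replicate_succ' ..,
        List.append_assoc, List.singleton_append, entropy_replicate_append,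
        entropy_cons_cons]
      have := ih (!v) (fun x hx => hl x (by simp [hx])) (by simp)
      rw [fromRuns_pos_cons _ _ _ hh] at this
      rw [this]
      simp

lemma ga1Crossover_step (m k : ℕ) (v : Bool) (x : List Bool) :
    ga1Crossover (m + k) (List.replicate m v ++ x)
      = List.replicate m (!v) ++ ga1Crossover k x := by
  unfold ga1Crossover
  rw [List.take_append, List.drop_append]
  simp [List.take_replicate, List.drop_replicate, List.map_replicate]

lemma ga1Mutate_step (m i : ℕ) (v : Bool) (x : List Bool) :
    ga1Mutate (m + i) (List.replicate m v ++ x)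
      = List.replicate m v ++ ga1Mutate i x := by
  unfold ga1Mutate
  rw [List.getD_eq_getElem?_getD, List.getElem?_append_right (by simp),
    List.set_append_right _ _ (by simp)]
  simp [List.getD_eq_getElem?_getD]

lemma ga1Crossover_zero (x : List Bool) : ga1Crossover 0 x = x := by
  simp [ga1Crossover]

lemma ga1Crossover_exact (m : ℕ) (v : Bool) (x : List Bool) :
    ga1Crossover m (List.replicate m v ++ x) = List.replicate m (!v) ++ x := by
  have := ga1Crossover_step m 0 v x
  simpa [ga1Crossover_zero] using this

lemma ga1Mutate_zero_cons (a : Bool) (x : List Bool) :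
    ga1Mutate 0 (a :: x) = (!a) :: x := by
  simp [ga1Mutate]

lemma ga1Mutate_in_replicate (i r : ℕ) (h : i < r) (v : Bool) (x : List Bool) :
    ga1Mutate i (List.replicate r v ++ x)
      = List.replicate i v ++ (!v) :: (List.replicate (r-1-i) v ++ x) := by
  obtain ⟨d, rfl⟩ : ∃ d, r = i + (1 + d) := ⟨r - 1 - i, by omega⟩
  have hd : i + (1 + d) - 1 - i = d := by omega
  rw [hd]
  have e1 : List.replicate (i + (1 + d)) v ++ x
      = List.replicate i v ++ (v :: (List.replicate d v ++ x)) := by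
    rw [List.replicate_add, List.replicate_add]
    simp
  have e2 := ga1Mutate_step i 0 v ((v : Bool) :: (List.replicate d v ++ x))
  simp only [Nat.add_zero] at e2
  rw [e1, e2, ga1Mutate_zero_cons]

lemma length_ga1Mutate (i : ℕ) (b : List Bool) : (ga1Mutate i b).length = b.length := by
  simp [ga1Mutate]

lemma length_ga1Crossover (k : ℕ) (b : List Bool) :
    (ga1Crossover k b).length = b.length := by
  simp [ga1Crossover]
  omega

def rlMove (l L : List ℕ) : Prop :=
  ∃ l₁ r l₂ mid, l = l₁ ++ r :: l₂ ∧ L = l₁ ++ mid ++ l₂ ∧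
    ((∃ a c, mid = [a, c] ∧ a + c = r ∧ 0 < a ∧ 0 < c) ∨
     (∃ a c, mid = [a, 1, c] ∧ a + 1 + c = r ∧ 0 < a ∧ 0 < c))

lemma rlMove_cons (x : ℕ) {l L : List ℕ} (h : rlMove l L) : rlMove (x :: l) (x :: L) := by
  obtain ⟨l₁, r, l₂, mid, rfl, rfl, hm⟩ := h
  exact ⟨x :: l₁, r, l₂, mid, rfl, rfl, hm⟩

lemma crossover_classify (l : List ℕ) : ∀ (v : Bool) (k : ℕ), (∀ x ∈ l, 0 < x) →
    1 ≤ k → k < l.sum →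
    ∃ L, (∀ x ∈ L, 0 < x) ∧ ga1Crossover k (fromRuns v l) = fromRuns (!v) L ∧
      (L.length ≤ l.length ∨ rlMove l L) := by
  induction l with
  | nil => intro v k _ _ h; simp at h
  | cons r t ih =>
    intro v k hpos hk1 hks
    have hr : 0 < r := hpos r (by simp)
    have hpt : ∀ x ∈ t, 0 < x := fun x hx => hpos x (by simp [hx])
    rcases lt_trichotomy k r with hlt | heq | hgt
    · obtain ⟨d, rfl⟩ : ∃ d, r = k + d := ⟨r - k, by omega⟩
      have hd : 0 < d := by omega
      refine ⟨k :: d :: t, ?_, ?_, Or.inr ⟨[], k + d, t, [k, d], rfl, rfl,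
        Or.inl ⟨k, d, rfl, rfl, hk1, hd⟩⟩⟩
      · intro x hx
        rcases List.mem_cons.1 hx with rfl | hx
        · exact hk1
        rcases List.mem_cons.1 hx with rfl | hx
        · exact hd
        · exact hpt x hx
      · rw [fromRuns_cons, List.replicate_add, List.append_assoc, ga1Crossover_exact]
        simp [fromRuns_cons, Bool.not_not]
    · subst heq
      cases t with
      | nil => simp at hks
      | cons h t' =>
        have hh : 0 < h := hpt h (by simp)
        refine ⟨(k + h) :: t', ?_, ?_, Or.inl (by simp)⟩
        · intro x hx
          rcases List.mem_cons.1 hx with rfl | hx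
          · omega
          · exact hpt x (by simp [hx])
        · rw [fromRuns_cons, ga1Crossover_exact, fromRuns_cons, fromRuns_cons,
            Bool.not_not, List.replicate_add, List.append_assoc]
    · obtain ⟨k', rfl⟩ : ∃ k', k = r + k' := ⟨k - r, by omega⟩
      have hk'1 : 1 ≤ k' := by omega
      have hk's : k' < t.sum := by simp at hks; omega
      obtain ⟨L', hposL, heq, hdisj⟩ := ih (!v) k' hpt hk'1 hk's
      refine ⟨r :: L', ?_, ?_, ?_⟩
      · intro x hx
        rcases List.mem_cons.1 hx with rfl | hx
        · exact hr
        · exact hposL x hx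
      · rw [fromRuns_cons, ga1Crossover_step, heq, fromRuns_cons, Bool.not_not]
      · rcases hdisj with h | h
        · exact Or.inl (by simpa using Nat.succ_le_succ h)
        · exact Or.inr (rlMove_cons r h)

lemma crossover_construct (l₁ : List ℕ) : ∀ (v : Bool) (a c : ℕ) (l₂ : List ℕ),
    ga1Crossover (l₁.sum + a) (fromRuns v (l₁ ++ (a + c) :: l₂))
      = fromRuns (!v) (l₁ ++ a :: c :: l₂) := by
  induction l₁ with
  | nil =>
    intro v a c l₂
    simp only [List.nil_append, List.sum_nil, Nat.zero_add]
    rw [fromRuns_cons, List.replicate_add, List.append_assoc, ga1Crossover_exact]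
    simp [fromRuns_cons, Bool.not_not]
  | cons r t ih =>
    intro v a c l₂
    rw [List.cons_append, fromRuns_cons,
      show (r :: t).sum + a = r + (t.sum + a) by simp; ring,
      ga1Crossover_step, ih (!v), List.cons_append, fromRuns_cons, Bool.not_not]

lemma mutate_construct (l₁ : List ℕ) : ∀ (v : Bool) (a c : ℕ) (l₂ : List ℕ), 0 < a →
    ga1Mutate (l₁.sum + a) (fromRuns v (l₁ ++ (a + 1 + c) :: l₂))
      = fromRuns v (l₁ ++ a :: 1 :: c :: l₂) := by
  induction l₁ with
  | nil =>
    intro v a c l₂ ha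
    simp only [List.nil_append, List.sum_nil, Nat.zero_add]
    rw [fromRuns_cons, ga1Mutate_in_replicate a (a+1+c) (by omega),
      show a + 1 + c - 1 - a = c by omega]
    simp [fromRuns_cons, Bool.not_not]
  | cons r t ih =>
    intro v a c l₂ ha
    rw [List.cons_append, fromRuns_cons,
      show (r :: t).sum + a = r + (t.sum + a) by simp; ring,
      ga1Mutate_step, ih (!v) a c l₂ ha, List.cons_append, fromRuns_cons]

lemma mutate_classify (l : List ℕ) : ∀ (v : Bool) (i : ℕ), (∀ x ∈ l, 0 < x) → i < l.sum →
    ∃ L, (∀ x ∈ L, 0 < x) ∧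
      ga1Mutate i (fromRuns v l) = fromRuns (if i = 0 then !v else v) L ∧
      (L.length ≤ l.length
        ∨ (∃ c t, l = (c+2) :: t ∧ L = 1 :: (c+1) :: t ∧ i = 0)
        ∨ (∃ l₁ a, l = l₁ ++ [a+2] ∧ L = l₁ ++ [a+1, 1] ∧ i = l.sum - 1)
        ∨ (∃ l₁ a c l₂, l = l₁ ++ (a+1+c) :: l₂ ∧ L = l₁ ++ a :: 1 :: c :: l₂ ∧
            0 < a ∧ 0 < c ∧ i = l₁.sum + a)) := by
  induction l with
  | nil => intro v i _ h; simp at h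
  | cons r t ih =>
    intro v i hpos hi
    have hr : 0 < r := hpos r (by simp)
    have hpt : ∀ x ∈ t, 0 < x := fun x hx => hpos x (by simp [hx])
    rcases Nat.lt_or_ge i r with hir | hir
    · -- inside first run
      rw [fromRuns_cons, ga1Mutate_in_replicate i r hir]
      rcases Nat.lt_or_ge (i+1) r with hmid | hlast
      · rcases Nat.eq_zero_or_pos i with rfl | hi0
        · -- i = 0, r ≥ 2 : front split
          refine ⟨1 :: (r-1) :: t, ?_, ?_, Or.inr (Or.inl ⟨r-2, t,
            by rw [show r - 2 + 2 = r from by omega],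
            by rw [show r - 2 + 1 = r - 1 from by omega], rfl⟩)⟩
          · intro x hx
            rcases List.mem_cons.1 hx with rfl | hx
            · omega
            rcases List.mem_cons.1 hx with rfl | hx
            · omega
            · exact hpt x hx
          · rw [if_pos rfl]
            simp [fromRuns_cons, Bool.not_not]
        · -- 0 < i, interior 3-split
          refine ⟨i :: 1 :: (r-1-i) :: t, ?_, ?_, Or.inr (Or.inr (Or.inr
            ⟨[], i, r-1-i, t, by simp only [List.nil_append]; congr 1; omega, rfl,
              hi0, by omega, by simp⟩))⟩
          · intro x hx
            rcases List.mem_cons.1 hx with rfl | hx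
            · exact hi0
            rcases List.mem_cons.1 hx with rfl | hx
            · omega
            rcases List.mem_cons.1 hx with rfl | hx
            · omega
            · exact hpt x hx
          · rw [if_neg (by omega)]
            simp [fromRuns_cons, Bool.not_not]
      · -- i = r - 1 : last bit of first run
        rcases Nat.eq_zero_or_pos i with rfl | hi0
        · -- r = 1
          have hr1 : r = 1 := by omega
          subst hr1
          rw [if_pos rfl]
          cases t with
          | nil =>
            exact ⟨[1], by simp, by simp [fromRuns_cons, fromRuns_nil], Or.inl (by simp)⟩
          | cons h t' =>
            have hh : 0 < h := hpt h (by simp)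
            refine ⟨(h+1) :: t', ?_, ?_, Or.inl (by simp)⟩
            · intro x hx
              rcases List.mem_cons.1 hx with rfl | hx
              · omega
              · exact hpt x (by simp [hx])
            · simp [fromRuns_cons, Bool.not_not, List.replicate_succ]
        · -- r ≥ 2, i = r-1
          rw [if_neg (by omega)]
          have hieq : i = r - 1 := by omega
          subst hieq
          cases t with
          | nil =>
            refine ⟨[r-1, 1], ?_, ?_, Or.inr (Or.inr (Or.inl ⟨[], r-2,
              by simp [show r - 2 + 2 = r from by omega],
              by simp [show r - 2 + 1 = r - 1 from by omega], by simp⟩))⟩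
            · intro x hx
              rcases List.mem_cons.1 hx with rfl | hx
              · omega
              rcases List.mem_cons.1 hx with rfl | hx
              · omega
              · simp at hx
            · simp [fromRuns_cons, fromRuns_nil, Bool.not_not,
                show r - 1 - (r-1) = 0 from by omega]
          | cons h t' =>
            have hh : 0 < h := hpt h (by simp)
            refine ⟨(r-1) :: (h+1) :: t', ?_, ?_, Or.inl (by simp)⟩
            · intro x hx
              rcases List.mem_cons.1 hx with rfl | hx
              · omega
              rcases List.mem_cons.1 hx with rfl | hx
              · omega
              · exact hpt x (by simp [hx])
            · simp [fromRuns_cons, Bool.not_not, List.replicate_succ,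
                show r - 1 - (r-1) = 0 from by omega]
    · -- i ≥ r : recurse into the tail
      obtain ⟨i', rfl⟩ : ∃ i', i = r + i' := ⟨i - r, by omega⟩
      have hi's : i' < t.sum := by simp at hi; omega
      rw [fromRuns_cons, ga1Mutate_step]
      obtain ⟨L', hposL, heq, hdisj⟩ := ih (!v) i' hpt hi's
      rw [heq, if_neg (show ¬ (r + i' = 0) from by omega)]
      by_cases hi'0 : i' = 0
      · subst hi'0
        rw [if_pos rfl, Bool.not_not] at heq ⊢
        have hlen : L'.sum = t.sum := by
          have h1 := congrArg List.length heq
          rw [length_ga1Mutate, length_fromRuns, length_fromRuns] at h1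
          exact h1.symm
        have hL'ne : L' ≠ [] := by
          intro hh; rw [hh] at hlen; simp at hlen; omega
        obtain ⟨h', t'', rfl⟩ := List.exists_cons_of_ne_nil hL'ne
        refine ⟨(r + h') :: t'', ?_, ?_, Or.inl ?_⟩
        · intro x hx
          rcases List.mem_cons.1 hx with rfl | hx
          · omega
          · exact hposL x (by simp [hx])
        · rw [fromRuns_cons, fromRuns_cons, List.replicate_add, List.append_assoc]
        · rcases hdisj with h1 | h2 | h3 | h4
          · simp at h1 ⊢; omega
          · obtain ⟨c, tt, ht, hL, -⟩ := h2
            have := congrArg List.length hL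
            have := congrArg List.length ht
            simp_all
          · obtain ⟨l₁, a, ht, -, hieq⟩ := h3
            exfalso
            rw [ht] at hieq
            simp [List.sum_append] at hieq
          · obtain ⟨l₁, a, c, l₂, -, -, ha, -, hieq⟩ := h4
            omega
      · rw [if_neg hi'0]
        refine ⟨r :: L', ?_, ?_, ?_⟩
        · intro x hx
          rcases List.mem_cons.1 hx with rfl | hx
          · exact hr
          · exact hposL x hx
        · rw [fromRuns_cons]
        · rcases hdisj with h1 | h2 | h3 | h4
          · exact Or.inl (by simpa using Nat.succ_le_succ h1)
          · obtain ⟨-, -, -, -, hi0⟩ := h2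
            exact absurd hi0 hi'0
          · obtain ⟨l₁, a, ht, hL, hieq⟩ := h3
            refine Or.inr (Or.inr (Or.inl ⟨r :: l₁, a, by simp [ht], by simp [hL], ?_⟩))
            have hsum : 2 ≤ t.sum := by
              rw [ht]; simp only [List.sum_append, List.sum_cons, List.sum_nil]; omega
            simp only [List.sum_cons]
            omega
          · obtain ⟨l₁, a, c, l₂, ht, hL, ha, hc, hieq⟩ := h4
            refine Or.inr (Or.inr (Or.inr ⟨r :: l₁, a, c, l₂, by simp [ht], by simp [hL],
              ha, hc, ?_⟩))
            simp only [List.sum_cons]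
            omega

lemma runLengths_spec (b : List Bool) :
    ∃ v, (∀ x ∈ runLengths b, 0 < x) ∧ b = fromRuns v (runLengths b) := by
  obtain ⟨v, l, hl, rfl⟩ := exists_fromRuns b
  rw [runLengths_fromRuns v l hl]
  exact ⟨v, hl, rfl⟩

lemma sum_runLengths (b : List Bool) : (runLengths b).sum = b.length := by
  obtain ⟨v, hp, hb⟩ := runLengths_spec b
  conv_rhs => rw [hb]
  rw [length_fromRuns]

lemma entropy_eq (b : List Bool) : entropy b = (runLengths b).length - 1 := by
  obtain ⟨v, hp, hb⟩ := runLengths_spec b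
  rcases eq_or_ne (runLengths b) [] with h | h
  · rw [h]
    rw [h] at hb
    rw [hb]
    simp [fromRuns_nil, entropy]
  · conv_lhs => rw [hb]
    exact entropy_fromRuns v _ hp h

lemma move_rlMove {b b' : List Bool} (h : ga1Move b b') :
    rlMove (runLengths b) (runLengths b') := by
  obtain ⟨hmv, hent⟩ := h
  obtain ⟨v, hp, hb⟩ := runLengths_spec b
  have hsum : (runLengths b).sum = b.length := sum_runLengths b
  rcases hmv with ⟨k, hk1, hk2, rfl⟩ | ⟨i, hi, rfl⟩
  · have hbne : 1 ≤ b.length := by omega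
    obtain ⟨L, hpL, heq, hdisj⟩ := crossover_classify (runLengths b) v k hp hk1 (by omega)
    have hRL : runLengths (ga1Crossover k b) = L := by
      conv_lhs => rw [hb]
      rw [heq, runLengths_fromRuns _ _ hpL]
    rcases hdisj with h1 | h1
    · exfalso
      have e1 := entropy_eq b
      have e2 := entropy_eq (ga1Crossover k b)
      rw [hRL] at e2
      have hlne : (runLengths b) ≠ [] := by
        intro hh; rw [hh] at hsum; simp at hsum; omega
      have : 1 ≤ (runLengths b).length := List.length_pos_iff.2 hlne
      omega
    · rw [hRL]; exact h1
  · obtain ⟨L, hpL, heq, hdisj⟩ := mutate_classify (runLengths b) v i hp (by omega)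
    have hRL : runLengths (ga1Mutate i b) = L := by
      conv_lhs => rw [hb]
      rw [heq, runLengths_fromRuns _ _ hpL]
    rcases hdisj with h1 | h1 | h1 | h1
    · exfalso
      have e1 := entropy_eq b
      have e2 := entropy_eq (ga1Mutate i b)
      rw [hRL] at e2
      have hlne : (runLengths b) ≠ [] := by
        intro hh; rw [hh] at hsum; simp at hsum; omega
      have : 1 ≤ (runLengths b).length := List.length_pos_iff.2 hlne
      omega
    · obtain ⟨c, t, hlh, hLh, -⟩ := h1
      rw [hRL, hlh, hLh]
      exact ⟨[], c+2, t, [1, c+1], rfl, rfl, Or.inl ⟨1, c+1, rfl, by omega, by omega, by omega⟩⟩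
    · obtain ⟨l₁, a, hlh, hLh, -⟩ := h1
      rw [hRL, hlh, hLh]
      exact ⟨l₁, a+2, [], [a+1, 1], by simp, by simp, Or.inl ⟨a+1, 1, rfl, by omega, by omega, by omega⟩⟩
    · obtain ⟨l₁, a, c, l₂, hlh, hLh, ha, hc, -⟩ := h1
      rw [hRL, hlh, hLh]
      exact ⟨l₁, a+1+c, l₂, [a, 1, c], rfl, by simp, Or.inr ⟨a, c, rfl, rfl, ha, hc⟩⟩

lemma rlMove_realize {b : List Bool} {L : List ℕ} (h : rlMove (runLengths b) L) :
    ∃ b', ga1Move b b' ∧ runLengths b' = L := by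
  obtain ⟨v, hp, hb⟩ := runLengths_spec b
  obtain ⟨l₁, r, l₂, mid, hl, hL, hshape⟩ := h
  have hsum : (runLengths b).sum = b.length := sum_runLengths b
  have hp₁ : ∀ x ∈ l₁, 0 < x := fun x hx => hp x (by rw [hl]; simp [hx])
  have hp₂ : ∀ x ∈ l₂, 0 < x := fun x hx => hp x (by rw [hl]; simp [hx])
  have hlen : b.length = l₁.sum + r + l₂.sum := by
    rw [← hsum, hl]; simp [List.sum_append]; omega
  have hrlen : (runLengths b).length = l₁.length + 1 + l₂.length := by
    rw [hl]; simp; omega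
  rcases hshape with ⟨a, c, rfl, hac, ha, hc⟩ | ⟨a, c, rfl, hac, ha, hc⟩
  · -- crossover realizes a 2-split
    refine ⟨ga1Crossover (l₁.sum + a) b, ⟨?_, ?_⟩, ?_⟩
    · exact Or.inl ⟨l₁.sum + a, by omega, by omega, rfl⟩
    · have heq : ga1Crossover (l₁.sum + a) b = fromRuns (!v) (l₁ ++ a :: c :: l₂) := by
        conv_lhs => rw [hb, hl, ← hac]
        exact crossover_construct l₁ v a c l₂
      have e2 := entropy_eq (ga1Crossover (l₁.sum + a) b)
      rw [heq, runLengths_fromRuns] at e2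
      · rw [entropy_eq b, heq, e2, hrlen]
        simp only [List.length_append, List.length_cons]
        omega
      · intro x hx
        simp at hx
        rcases hx with hx | rfl | rfl | hx
        · exact hp₁ x hx
        · exact ha
        · exact hc
        · exact hp₂ x hx
    · have heq : ga1Crossover (l₁.sum + a) b = fromRuns (!v) (l₁ ++ a :: c :: l₂) := by
        conv_lhs => rw [hb, hl, ← hac]
        exact crossover_construct l₁ v a c l₂
      rw [heq, runLengths_fromRuns, hL]
      · simp
      · intro x hx
        simp at hx
        rcases hx with hx | rfl | rfl | hx
        · exact hp₁ x hx
        · exact ha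
        · exact hc
        · exact hp₂ x hx
  · -- mutation realizes a 3-split
    refine ⟨ga1Mutate (l₁.sum + a) b, ⟨?_, ?_⟩, ?_⟩
    · exact Or.inr ⟨l₁.sum + a, by omega, rfl⟩
    · have heq : ga1Mutate (l₁.sum + a) b = fromRuns v (l₁ ++ a :: 1 :: c :: l₂) := by
        conv_lhs => rw [hb, hl, ← hac]
        exact mutate_construct l₁ v a c l₂ ha
      have e2 := entropy_eq (ga1Mutate (l₁.sum + a) b)
      rw [heq, runLengths_fromRuns] at e2
      · rw [entropy_eq b, heq, e2, hrlen]
        simp only [List.length_append, List.length_cons]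
        omega
      · intro x hx
        simp at hx
        rcases hx with hx | rfl | rfl | rfl | hx
        · exact hp₁ x hx
        · exact ha
        · omega
        · exact hc
        · exact hp₂ x hx
    · have heq : ga1Mutate (l₁.sum + a) b = fromRuns v (l₁ ++ a :: 1 :: c :: l₂) := by
        conv_lhs => rw [hb, hl, ← hac]
        exact mutate_construct l₁ v a c l₂ ha
      rw [heq, runLengths_fromRuns, hL]
      · simp
      · intro x hx
        simp at hx
        rcases hx with hx | rfl | rfl | rfl | hx
        · exact hp₁ x hx
        · exact ha
        · omega
        · exact hc
        · exact hp₂ x hx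

lemma rlMove_perm {l l' L : List ℕ} (hp : l.Perm l') (h : rlMove l L) :
    ∃ L', rlMove l' L' ∧ L.Perm L' := by
  obtain ⟨l₁, r, l₂, mid, rfl, rfl, hshape⟩ := h
  have hr : r ∈ l' := hp.mem_iff.1 (by simp)
  obtain ⟨s, t, rfl⟩ := List.append_of_mem hr
  refine ⟨s ++ mid ++ t, ⟨s, r, t, mid, rfl, rfl, hshape⟩, ?_⟩
  have swap : ∀ x y z : List ℕ, (x ++ y ++ z).Perm (y ++ (x ++ z)) := by
    intro x y z
    have := (List.perm_append_comm (l₁ := x) (l₂ := y)).append_right z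
    simpa [List.append_assoc] using this
  have h1 : (l₁ ++ l₂).Perm (s ++ t) := by
    have h2 : (r :: (l₁ ++ l₂)).Perm (r :: (s ++ t)) :=
      (List.perm_middle.symm.trans hp).trans List.perm_middle
    exact h2.cons_inv
  exact ((swap l₁ mid l₂).trans (h1.append_left mid)).trans (swap s mid t).symm

lemma length_le_sum_of_pos {l : List ℕ} (hp : ∀ x ∈ l, 0 < x) : l.length ≤ l.sum := by
  induction l with
  | nil => simp
  | cons h t ih =>
    have := hp h (by simp)
    have := ih (fun x hx => hp x (by simp [hx]))
    simp only [List.length_cons, List.sum_cons]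
    omega

lemma length_ga1Move {b b' : List Bool} (h : ga1Move b b') : b'.length = b.length := by
  obtain ⟨hmv, -⟩ := h
  rcases hmv with ⟨k, -, -, rfl⟩ | ⟨i, -, rfl⟩
  · exact length_ga1Crossover k b
  · exact length_ga1Mutate i b

lemma entropy_lt_length {b b' : List Bool} (h : ga1Move b b') : entropy b < b.length := by
  have hbne : b ≠ [] := by
    rintro rfl
    obtain ⟨hmv, -⟩ := h
    rcases hmv with ⟨k, hk1, hk2, -⟩ | ⟨i, hi, -⟩
    · simp at hk2; omega
    · simp at hi
  have h1 := entropy_eq b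
  have h2 := sum_runLengths b
  obtain ⟨v, hp, hb⟩ := runLengths_spec b
  have h3 := length_le_sum_of_pos hp
  have h4 : (runLengths b) ≠ [] := by
    intro hh
    rw [hh] at hb
    exact hbne (by rw [hb, fromRuns_nil])
  have h5 : 1 ≤ (runLengths b).length := List.length_pos_iff.2 h4
  omega


/-- The order of runs does not affect the Grundy value of GA1: if two bit
strings have sequences of run lengths that are permutations of each other, then the two GA1
positions have the same Grundy value. -/
theorem ga1_grundy_ignores_run_order
    (g : List Bool → ℕ)
    (hg : ∀ b, g b = mex {m | ∃ b', ga1Move b b' ∧ m = g b'})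
    (b₁ b₂ : List Bool)
    (h : (runLengths b₁).Perm (runLengths b₂)) :
    g b₁ = g b₂ := by
  suffices H : ∀ n (b₁ b₂ : List Bool), b₁.length - entropy b₁ ≤ n →
      (runLengths b₁).Perm (runLengths b₂) → g b₁ = g b₂ from
    H _ b₁ b₂ le_rfl h
  intro n
  induction n using Nat.strong_induction_on with
  | _ n IH =>
    intro b₁ b₂ hm hperm
    have hlen12 : b₂.length = b₁.length := by
      rw [← sum_runLengths, ← sum_runLengths, hperm.sum_eq]
    have hent12 : entropy b₂ = entropy b₁ := by
      rw [entropy_eq, entropy_eq, hperm.length_eq]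
    rw [hg b₁, hg b₂]
    congr 1
    ext m
    simp only [Set.mem_setOf_eq]
    constructor
    · rintro ⟨b', hmv, rfl⟩
      have h1 := move_rlMove hmv
      obtain ⟨M', hM', hpm⟩ := rlMove_perm hperm h1
      obtain ⟨b₂', hmv₂, hrl₂⟩ := rlMove_realize hM'
      refine ⟨b₂', hmv₂, ?_⟩
      have hdec : b'.length - entropy b' < n := by
        have e1 := length_ga1Move hmv
        have e2 := hmv.2
        have e3 := entropy_lt_length hmv
        omega
      exact IH _ hdec b' b₂' le_rfl (by rw [hrl₂]; exact hpm)
    · rintro ⟨b', hmv, rfl⟩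
      have h1 := move_rlMove hmv
      obtain ⟨M', hM', hpm⟩ := rlMove_perm hperm.symm h1
      obtain ⟨b₁', hmv₁, hrl₁⟩ := rlMove_realize hM'
      refine ⟨b₁', hmv₁, ?_⟩
      have hdec : b'.length - entropy b' < n := by
        have e1 := length_ga1Move hmv
        have e2 := hmv.2
        have e3 := entropy_lt_length hmv
        omega
      exact IH _ hdec b' b₁' le_rfl (by rw [hrl₁]; exact hpm)
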